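/- Let μ_f, μ_g > 0 and B ∈ ℝ^{n×m}. Define D_μ = diag(μ_f I_m, μ_g I_n) and B_sym = [[0, Bᵀ],[B, 0]]. Then every eigenvalue of D_μ^{-1} B_sym has absolute value at most ‖B‖/√(μ_f μ_g), and for any α, c > 0, (1 − α‖B‖/(c√(μ_f μ_g))) c D_μ ⪯ c D_μ ± α B_sym ⪯ (1 + α‖B‖/(c√(μ_f μ_g))) c D_μ. -/

import Mathlib

open Matrix

private lemma realHerm_smul {k : Type*} (r : ℝ) (A : Matrix k k ℝ)
    (h : A.IsHermitian) : (r • A).IsHermitian := by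
  unfold Matrix.IsHermitian at *
  rw [Matrix.conjTranspose_smul, h, star_trivial]

private lemma realTransposeHerm {k l : Type*} (A : Matrix k l ℝ) : (Aᵀ)ᴴ = A := by
  ext i j
  simp [Matrix.conjTranspose_apply]

/-- Eigenvalue bound for `D_μ⁻¹ B_sym` and the Loewner sandwich
`(1 − α‖B‖/(c√(μ_f μ_g))) c D_μ ⪯ c D_μ ± α B_sym ⪯ (1 + α‖B‖/(c√(μ_f μ_g))) c D_μ`,
where `‖B‖` is the spectral norm of `B`. -/
theorem saddle_block_matrix_eigenvalue_and_loewner_bounds {m n : ℕ}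
    (B : Matrix (Fin n) (Fin m) ℝ) (μf μg : ℝ) (hμf : 0 < μf) (hμg : 0 < μg)
    (Dμ Bsym : Matrix (Fin m ⊕ Fin n) (Fin m ⊕ Fin n) ℝ)
    (hDμ : Dμ = Matrix.fromBlocks (μf • 1) 0 0 (μg • 1))
    (hBsym : Bsym = Matrix.fromBlocks 0 Bᵀ B 0)
    (nB : ℝ)
    (hnB : nB = ‖LinearMap.toContinuousLinearMap (Matrix.toEuclideanLin B)‖) :
    (∀ (lam : ℝ) (v : Fin m ⊕ Fin n → ℝ), v ≠ 0 →
        (Dμ⁻¹ * Bsym) *ᵥ v = lam • v → |lam| ≤ nB / Real.sqrt (μf * μg)) ∧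
    (∀ α c : ℝ, 0 < α → 0 < c → ∀ s : ℝ, s = α ∨ s = -α →
        ((c • Dμ + s • Bsym) - (1 - α * nB / (c * Real.sqrt (μf * μg))) • (c • Dμ)).PosSemidef ∧
        ((1 + α * nB / (c * Real.sqrt (μf * μg))) • (c • Dμ) - (c • Dμ + s • Bsym)).PosSemidef) := by
  have hs : 0 < Real.sqrt (μf * μg) := Real.sqrt_pos.mpr (mul_pos hμf hμg)
  set sq : ℝ := Real.sqrt (μf * μg) with hsq
  have hs2 : sq ^ 2 = μf * μg := Real.sq_sqrt (mul_pos hμf hμg).le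
  have hnB0 : 0 ≤ nB := hnB ▸ norm_nonneg _
  set K : ℝ := nB / sq with hK
  have hK0 : 0 ≤ K := div_nonneg hnB0 hs.le
  -- key quadratic form facts
  have main : ∀ v : Fin m ⊕ Fin n → ℝ,
      0 ≤ v ⬝ᵥ (Dμ *ᵥ v) ∧ |v ⬝ᵥ (Bsym *ᵥ v)| ≤ K * (v ⬝ᵥ (Dμ *ᵥ v)) ∧
      (v ≠ 0 → 0 < v ⬝ᵥ (Dμ *ᵥ v)) := by
    intro v
    set x : Fin m → ℝ := fun i => v (Sum.inl i) with hx
    set y : Fin n → ℝ := fun j => v (Sum.inr j) with hy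
    have hv : v = Sum.elim x y := by funext i; cases i <;> rfl
    set X : EuclideanSpace ℝ (Fin m) := (WithLp.equiv 2 (Fin m → ℝ)).symm x with hX
    set Y : EuclideanSpace ℝ (Fin n) := (WithLp.equiv 2 (Fin n → ℝ)).symm y with hY
    have hX2 : ‖X‖ ^ 2 = x ⬝ᵥ x := by
      rw [EuclideanSpace.norm_eq, Real.sq_sqrt (by positivity)]
      simp [dotProduct, hX, WithLp.equiv_symm_apply, Real.norm_eq_abs, sq_abs, pow_two]
    have hY2 : ‖Y‖ ^ 2 = y ⬝ᵥ y := by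
      rw [EuclideanSpace.norm_eq, Real.sq_sqrt (by positivity)]
      simp [dotProduct, hY, WithLp.equiv_symm_apply, Real.norm_eq_abs, sq_abs, pow_two]
    have hQv : v ⬝ᵥ (Dμ *ᵥ v) = μf * ‖X‖ ^ 2 + μg * ‖Y‖ ^ 2 := by
      rw [hX2, hY2, hDμ]
      conv_lhs => rw [hv]
      rw [Matrix.fromBlocks_mulVec]
      simp [dotProduct, Fintype.sum_sum_type, Matrix.smul_mulVec, Finset.mul_sum,
        mul_comm, mul_assoc, mul_left_comm]
    have hdot : |y ⬝ᵥ (B *ᵥ x)| ≤ nB * (‖X‖ * ‖Y‖) := by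
      have hinner : y ⬝ᵥ (B *ᵥ x) = inner ℝ Y (Matrix.toEuclideanLin B X) := by
        rw [hX, WithLp.equiv_symm_apply, Matrix.toEuclideanLin_apply_piLp_toLp]
        simp [PiLp.inner_apply, RCLike.inner_apply, dotProduct, hY,
          WithLp.equiv_symm_apply, mul_comm]
      have hBn : ‖Matrix.toEuclideanLin B X‖ ≤ nB * ‖X‖ := by
        rw [hnB]
        simpa using (LinearMap.toContinuousLinearMap (Matrix.toEuclideanLin B)).le_opNorm X
      calc |y ⬝ᵥ (B *ᵥ x)| = |inner ℝ Y (Matrix.toEuclideanLin B X)| := by rw [hinner]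
        _ ≤ ‖Y‖ * ‖Matrix.toEuclideanLin B X‖ := abs_real_inner_le_norm _ _
        _ ≤ ‖Y‖ * (nB * ‖X‖) := mul_le_mul_of_nonneg_left hBn (norm_nonneg _)
        _ = nB * (‖X‖ * ‖Y‖) := by ring
    have hPv : v ⬝ᵥ (Bsym *ᵥ v) = 2 * (y ⬝ᵥ (B *ᵥ x)) := by
      rw [hBsym]
      conv_lhs => rw [hv]
      rw [Matrix.fromBlocks_mulVec]
      simp only [Matrix.zero_mulVec, zero_add, add_zero, Sum.elim_comp_inl, Sum.elim_comp_inr]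
      have : (Sum.elim x y) ⬝ᵥ (Sum.elim (Bᵀ *ᵥ y) (B *ᵥ x)) = x ⬝ᵥ (Bᵀ *ᵥ y) + y ⬝ᵥ (B *ᵥ x) := by
        simp [dotProduct, Fintype.sum_sum_type]
      rw [this, Matrix.dotProduct_mulVec, Matrix.vecMul_transpose, dotProduct_comm]
      ring
    clear_value X Y
    clear_value x y
    have hQ0 : 0 ≤ v ⬝ᵥ (Dμ *ᵥ v) := by rw [hQv]; positivity
    refine ⟨hQ0, ?_, ?_⟩
    · -- |P| ≤ K * Q
      have hAM : 2 * (sq * (‖X‖ * ‖Y‖)) ≤ μf * ‖X‖ ^ 2 + μg * ‖Y‖ ^ 2 := by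
        nlinarith [sq_nonneg (μf * ‖X‖ - sq * ‖Y‖), hμf, hs, sq_nonneg ‖X‖, sq_nonneg ‖Y‖, hs2,
          mul_pos hμf hμg]
      have h1 : |v ⬝ᵥ (Bsym *ᵥ v)| ≤ 2 * (nB * (‖X‖ * ‖Y‖)) := by
        rw [hPv, abs_mul]
        have : |(2 : ℝ)| = 2 := by norm_num
        rw [this]
        linarith [hdot]
      have h2 : 2 * (nB * (‖X‖ * ‖Y‖)) ≤ K * (μf * ‖X‖ ^ 2 + μg * ‖Y‖ ^ 2) := by
        have hrw : 2 * (nB * (‖X‖ * ‖Y‖)) = K * (2 * (sq * (‖X‖ * ‖Y‖))) := by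
          rw [hK]; field_simp
        rw [hrw]
        exact mul_le_mul_of_nonneg_left hAM hK0
      rw [hQv]; linarith
    · -- positivity for nonzero v
      intro hv0
      have hxy : 0 < x ⬝ᵥ x ∨ 0 < y ⬝ᵥ y := by
        obtain ⟨i, hi⟩ := Function.ne_iff.mp hv0
        have hxx : ∀ (k : ℕ) (z : Fin k → ℝ) (a : Fin k), z a ≠ 0 → 0 < z ⬝ᵥ z := by
          intro k z a ha
          have h1 : 0 < z a * z a := mul_self_pos.mpr ha
          have h2 : z a * z a ≤ ∑ j, z j * z j :=
            Finset.single_le_sum (fun j _ => mul_self_nonneg (z j)) (Finset.mem_univ a)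
          exact lt_of_lt_of_le h1 h2
        cases i with
        | inl a => exact Or.inl (hxx _ x a (by rw [hx]; simpa using hi))
        | inr b => exact Or.inr (hxx _ y b (by rw [hy]; simpa using hi))
      have hxX : 0 ≤ x ⬝ᵥ x := hX2 ▸ sq_nonneg _
      have hyY : 0 ≤ y ⬝ᵥ y := hY2 ▸ sq_nonneg _
      rw [hQv, hX2, hY2]
      rcases hxy with h | h
      · exact add_pos_of_pos_of_nonneg (mul_pos hμf h) (mul_nonneg hμg.le hyY)
      · exact add_pos_of_nonneg_of_pos (mul_nonneg hμf.le hxX) (mul_pos hμg h)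
  constructor
  · -- eigenvalue bound
    intro lam v hv0 hEig
    have hdet : IsUnit Dμ.det := by
      rw [hDμ, Matrix.det_fromBlocks_zero₂₁, Matrix.det_smul, Matrix.det_smul,
        Matrix.det_one, Matrix.det_one]
      exact isUnit_iff_ne_zero.mpr (by positivity)
    have hDinv : Dμ * Dμ⁻¹ = 1 := Matrix.mul_nonsing_inv _ hdet
    have hBv : Bsym *ᵥ v = lam • (Dμ *ᵥ v) := by
      have h1 : Dμ *ᵥ ((Dμ⁻¹ * Bsym) *ᵥ v) = Bsym *ᵥ v := by
        rw [Matrix.mulVec_mulVec, ← Matrix.mul_assoc, hDinv, Matrix.one_mul]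
      rw [← h1, hEig, Matrix.mulVec_smul]
    obtain ⟨hQ0, hP, hQpos⟩ := main v
    have hQ : 0 < v ⬝ᵥ (Dμ *ᵥ v) := hQpos hv0
    have hPQ : v ⬝ᵥ (Bsym *ᵥ v) = lam * (v ⬝ᵥ (Dμ *ᵥ v)) := by
      rw [hBv, dotProduct_smul, smul_eq_mul]
    rw [hPQ, abs_mul, abs_of_pos hQ] at hP
    exact le_of_mul_le_mul_right hP hQ
  · -- Loewner bounds
    intro α c hα hc σ hσ
    have habs : |σ| = α := by
      rcases hσ with h | h <;> subst h
      · exact abs_of_pos hα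
      · rw [abs_neg]; exact abs_of_pos hα
    have hDH : Dμ.IsHermitian := by
      rw [hDμ]
      exact Matrix.IsHermitian.fromBlocks (realHerm_smul _ _ Matrix.isHermitian_one)
        (by simp) (realHerm_smul _ _ Matrix.isHermitian_one)
    have hBH : Bsym.IsHermitian := by
      rw [hBsym]
      exact Matrix.IsHermitian.fromBlocks Matrix.isHermitian_zero (realTransposeHerm B)
        Matrix.isHermitian_zero
    have hM1 : (c • Dμ + σ • Bsym) - (1 - α * nB / (c * sq)) • (c • Dμ) =
        (α * K) • Dμ + σ • Bsym := by
      match_scalars <;> field_simp [hK, hs.ne', hc.ne'] <;> rw [hK] <;> field_simp <;> ring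
    have hM2 : (1 + α * nB / (c * sq)) • (c • Dμ) - (c • Dμ + σ • Bsym) =
        (α * K) • Dμ + (-σ) • Bsym := by
      match_scalars <;> field_simp [hK, hs.ne', hc.ne'] <;> rw [hK] <;> field_simp <;> ring
    have hherm : ∀ τ : ℝ, ((α * K) • Dμ + τ • Bsym).IsHermitian :=
      fun τ => (realHerm_smul _ _ hDH).add (realHerm_smul _ _ hBH)
    have hpsd : ∀ τ : ℝ, |τ| = α → ((α * K) • Dμ + τ • Bsym).PosSemidef := by
      intro τ hτ
      refine Matrix.PosSemidef.of_dotProduct_mulVec_nonneg (hherm τ) fun w => ?_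
      obtain ⟨hQ0, hP, _⟩ := main w
      have hb := abs_le.mp hP
      have hτ1 : -α ≤ τ := (abs_le.mp hτ.le).1
      have hτ2 : τ ≤ α := (abs_le.mp hτ.le).2
      simp only [star_trivial, Matrix.add_mulVec, Matrix.smul_mulVec,
        dotProduct_add, dotProduct_smul, smul_eq_mul]
      have h1 : |τ * (w ⬝ᵥ (Bsym *ᵥ w))| ≤ α * K * (w ⬝ᵥ (Dμ *ᵥ w)) := by
        rw [abs_mul, hτ, mul_assoc]
        exact mul_le_mul_of_nonneg_left hP hα.le
      linarith [(abs_le.mp h1).1]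
    have habs' : |(-σ)| = α := by rw [abs_neg, habs]
    exact ⟨hM1 ▸ hpsd σ habs, hM2 ▸ hpsd (-σ) habs'⟩
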